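/- arXiv:1505.07523 — 2 statements merged into one kernel-verified Lean document; each statement's English description precedes it below -/
import Mathlib

section
/- Let $H$ be a real Hilbert space, $\mathcal{A}$ a self-adjoint positive operator, and let $u \in C^3([0,\infty); H)$ with $u(t), u_t(t) \in \mathcal{D}(\mathcal{A})$ solve $\tau u_{ttt} + \alpha u_{tt} + c^2 \mathcal{A} u + b \mathcal{A} u_t = 0$ with $\tau, b, c > 0$ and $\gamma := \alpha - \frac{c^2\tau}{b} = 0$. Define $z(t) = u_t(t) + \frac{c^2}{b} u(t)$ and $E_0^{cr}(t) = b\|\mathcal{A}^{1/2} z(t)\|^2 + \tau \|z_t(t)\|^2$. Then $E_0^{cr}(t) = E_0^{cr}(0)$ for all $t \ge 0$. -/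
/-- Conservation of the critical energy for the MGT equation: if `γ = α - c²τ/b = 0`
and `u` solves `τu''' + αu'' + c²Au + bAu' = 0`, then with `z = u' + (c²/b)u` the
energy `E₀ᶜʳ(t) = b‖A½z‖² + τ‖z'‖²` (written via `‖A½v‖² = (Av, v)`) is constant. -/
theorem mgt_critical_energy_conserved {H : Type*} [NormedAddCommGroup H]
    [InnerProductSpace ℝ H] [CompleteSpace H]
    (A : H →L[ℝ] H) (hA_sa : IsSelfAdjoint A)
    (hA_pos : ∀ v : H, 0 ≤ (inner ℝ (A v) v : ℝ))
    (τ α b c : ℝ) (hτ : 0 < τ) (hb : 0 < b) (hc : 0 < c)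
    (hγ : α - c ^ 2 * τ / b = 0)
    (u u1 u2 u3 : ℝ → H)
    (hu1 : ∀ t, HasDerivAt u (u1 t) t)
    (hu2 : ∀ t, HasDerivAt u1 (u2 t) t)
    (hu3 : ∀ t, HasDerivAt u2 (u3 t) t)
    (hcont : Continuous u3)
    (heq : ∀ t, τ • u3 t + α • u2 t + c ^ 2 • A (u t) + b • A (u1 t) = 0) :
    ∀ t, 0 ≤ t →
      b * (inner ℝ (A (u1 t + (c ^ 2 / b) • u t)) (u1 t + (c ^ 2 / b) • u t) : ℝ)
        + τ * ‖u2 t + (c ^ 2 / b) • u1 t‖ ^ 2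
      = b * (inner ℝ (A (u1 0 + (c ^ 2 / b) • u 0)) (u1 0 + (c ^ 2 / b) • u 0) : ℝ)
        + τ * ‖u2 0 + (c ^ 2 / b) • u1 0‖ ^ 2 := by
  set z : ℝ → H := fun t => u1 t + (c ^ 2 / b) • u t with hzdef
  set zp : ℝ → H := fun t => u2 t + (c ^ 2 / b) • u1 t with hzpdef
  set zpp : ℝ → H := fun t => u3 t + (c ^ 2 / b) • u2 t with hzppdef
  have hz : ∀ t, HasDerivAt z (zp t) t := fun t =>
    (hu2 t).add ((hu1 t).const_smul _)
  have hzp : ∀ t, HasDerivAt zp (zpp t) t := fun t =>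
    (hu3 t).add ((hu2 t).const_smul _)
  have hα : α = c ^ 2 * τ / b := by linarith
  -- wave equation for z : τ z'' + b A z = 0
  have hwave : ∀ t, τ • zpp t + b • A (z t) = 0 := by
    intro t
    have h := heq t
    have e1 : τ * (c ^ 2 / b) = α := by rw [hα]; ring
    have e2 : b * (c ^ 2 / b) = c ^ 2 := by field_simp
    simp only [hzppdef, hzdef, map_add, map_smul, smul_add, smul_smul, e1, e2]
    rw [← h]; abel
  set E : ℝ → ℝ := fun t =>
    b * (inner ℝ (A (z t)) (z t) : ℝ) + τ * (inner ℝ (zp t) (zp t) : ℝ) with hEdef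
  have hsymA := (ContinuousLinearMap.isSelfAdjoint_iff_isSymmetric.mp hA_sa)
  have hE : ∀ t, HasDerivAt E 0 t := by
    intro t
    have h1 : HasDerivAt (fun t => (inner ℝ (A (z t)) (z t) : ℝ))
        ((inner ℝ (A (z t)) (zp t) : ℝ) + inner ℝ (A (zp t)) (z t) : ℝ) t :=
      HasDerivAt.inner ℝ ((A.hasFDerivAt.comp_hasDerivAt t (hz t))) (hz t)
    have h2 : HasDerivAt (fun t => (inner ℝ (zp t) (zp t) : ℝ))
        ((inner ℝ (zp t) (zpp t) : ℝ) + inner ℝ (zpp t) (zp t) : ℝ) t :=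
      HasDerivAt.inner ℝ (hzp t) (hzp t)
    have hsum := (h1.const_mul b).add (h2.const_mul τ)
    have hsym : (inner ℝ (A (zp t)) (z t) : ℝ) = inner ℝ (A (z t)) (zp t) :=
      (hsymA (zp t) (z t)).trans (real_inner_comm _ _)
    have hsym2 : (inner ℝ (zpp t) (zp t) : ℝ) = inner ℝ (zp t) (zpp t) := real_inner_comm _ _
    have hw : (inner ℝ (τ • zpp t + b • A (z t)) (zp t) : ℝ) = 0 := by
      rw [hwave t]; simp
    rw [inner_add_left, real_inner_smul_left, real_inner_smul_left] at hw
    have hkey : b * ((inner ℝ (A (z t)) (zp t) : ℝ) + inner ℝ (A (zp t)) (z t))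
        + τ * ((inner ℝ (zp t) (zpp t) : ℝ) + inner ℝ (zpp t) (zp t)) = 0 := by
      rw [hsym, hsym2]
      rw [hsym2] at hw
      linarith
    rw [hkey] at hsum
    exact hsum
  have hconst : ∀ t, E t = E 0 := by
    intro t
    have : ∀ s, deriv E s = 0 := fun s => (hE s).deriv
    exact is_const_of_deriv_eq_zero (fun s => (hE s).differentiableAt) this t 0
  intro t _
  have := hconst t
  simp only [hEdef, hzdef, hzpdef] at this
  rw [real_inner_self_eq_norm_sq, real_inner_self_eq_norm_sq] at this
  exact this
end

section
/- Let $H$ be a real Hilbert space, $\mathcal{A}$ self-adjoint positive, and let $u$ be a sufficiently smooth solution of $\tau u_{ttt} + \alpha u_{tt} + c^2\mathcal{A}u + b\mathcal{A}u_t = 0$ with $\tau, \alpha, b, c > 0$ and $\gamma = \alpha - \frac{c^2\tau}{b} > 0$. Fix $k \in (\frac{c^2}{b}, \frac{\alpha}{\tau})$ and define $E_0(t) = b\|\mathcal{A}^{1/2}u_t + \frac{c^2}{b}\mathcal{A}^{1/2}u\|^2 + \tau\|u_{tt} + k u_t\|^2 + k\tau(\frac{\alpha}{\tau}-k)\|u_t\|^2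 + c^2(k - \frac{c^2}{b})\|\mathcal{A}^{1/2}u\|^2$. Then $\frac{d}{dt}E_0(t) = -2\tau(\frac{\alpha}{\tau}-k)\|u_{tt}\|^2 - 2b(k-\frac{c^2}{b})\|\mathcal{A}^{1/2}u_t\|^2 \le 0$; in particular $E_0$ is nonincreasing. -/
/-- Energy identity for the linearized MGT equation in the non-critical regime:
`E₀'(t) = -2τ(α/τ - k)‖uₜₜ‖² - 2b(k - c²/b)‖A½uₜ‖² ≤ 0`
(with `‖A½v‖²` written as `(Av, v)`). -/
theorem mgt_noncritical_energy_identity {H : Type*} [NormedAddCommGroup H]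
    [InnerProductSpace ℝ H] [CompleteSpace H]
    (A : H →L[ℝ] H) (hA_sa : IsSelfAdjoint A)
    (hA_pos : ∀ v : H, 0 ≤ (inner ℝ (A v) v : ℝ))
    (τ α b c : ℝ) (hτ : 0 < τ) (hα : 0 < α) (hb : 0 < b) (hc : 0 < c)
    (hγ : 0 < α - c ^ 2 * τ / b)
    (k : ℝ) (hk1 : c ^ 2 / b < k) (hk2 : k < α / τ)
    (u u1 u2 u3 : ℝ → H)
    (hu1 : ∀ t, HasDerivAt u (u1 t) t)
    (hu2 : ∀ t, HasDerivAt u1 (u2 t) t)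
    (hu3 : ∀ t, HasDerivAt u2 (u3 t) t)
    (hcont : Continuous u3)
    (heq : ∀ t, τ • u3 t + α • u2 t + c ^ 2 • A (u t) + b • A (u1 t) = 0) :
    ∀ t, 0 ≤ t →
      HasDerivAt
        (fun t =>
          b * (inner ℝ (A (u1 t + (c ^ 2 / b) • u t)) (u1 t + (c ^ 2 / b) • u t) : ℝ)
          + τ * ‖u2 t + k • u1 t‖ ^ 2
          + k * τ * (α / τ - k) * ‖u1 t‖ ^ 2
          + c ^ 2 * (k - c ^ 2 / b) * (inner ℝ (A (u t)) (u t) : ℝ))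
        (-(2 * τ * (α / τ - k) * ‖u2 t‖ ^ 2
            + 2 * b * (k - c ^ 2 / b) * (inner ℝ (A (u1 t)) (u1 t) : ℝ))) t ∧
      -(2 * τ * (α / τ - k) * ‖u2 t‖ ^ 2
          + 2 * b * (k - c ^ 2 / b) * (inner ℝ (A (u1 t)) (u1 t) : ℝ)) ≤ 0 := by
  have hsym := (ContinuousLinearMap.isSelfAdjoint_iff_isSymmetric.mp hA_sa)
  have hτ' : τ ≠ 0 := ne_of_gt hτ
  have hb' : b ≠ 0 := ne_of_gt hb
  intro t ht
  constructor
  · have hw : HasDerivAt (fun t => u1 t + (c ^ 2 / b) • u t)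
        (u2 t + (c ^ 2 / b) • u1 t) t := (hu2 t).add ((hu1 t).const_smul _)
    have hAw : HasDerivAt (fun t => A (u1 t + (c ^ 2 / b) • u t))
        (A (u2 t + (c ^ 2 / b) • u1 t)) t := A.hasFDerivAt.comp_hasDerivAt t hw
    have h1 := (hAw.inner ℝ hw).const_mul b
    have hz : HasDerivAt (fun t => u2 t + k • u1 t) (u3 t + k • u2 t) t :=
      (hu3 t).add ((hu2 t).const_smul _)
    have h2 := (hz.inner ℝ hz).const_mul τ
    have h3 := ((hu2 t).inner ℝ (hu2 t)).const_mul (k * τ * (α / τ - k))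
    have hAu : HasDerivAt (fun t => A (u t)) (A (u1 t)) t :=
      A.hasFDerivAt.comp_hasDerivAt t (hu1 t)
    have h4 := (hAu.inner ℝ (hu1 t)).const_mul (c ^ 2 * (k - c ^ 2 / b))
    simp only [real_inner_self_eq_norm_sq] at h2 h3
    have hD := ((h1.add h2).add h3).add h4
    refine hD.congr_deriv (Eq.symm ?_)
    -- equality of derivative values
    have he1 : (inner ℝ (τ • u3 t + α • u2 t + c ^ 2 • A (u t) + b • A (u1 t)) (u1 t) : ℝ) = 0 := by
      rw [heq t]; simp
    have he2 : (inner ℝ (τ • u3 t + α • u2 t + c ^ 2 • A (u t) + b • A (u1 t)) (u2 t) : ℝ) = 0 := by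
      rw [heq t]; simp
    have hs1 : (inner ℝ (A (u t)) (u1 t) : ℝ) = inner ℝ (A (u1 t)) (u t) := by
      rw [show (inner ℝ (A (u t)) (u1 t) : ℝ) = inner ℝ (u t) (A (u1 t)) from hsym (u t) (u1 t),
        real_inner_comm]
    have hs2 : (inner ℝ (A (u t)) (u2 t) : ℝ) = inner ℝ (A (u2 t)) (u t) := by
      rw [show (inner ℝ (A (u t)) (u2 t) : ℝ) = inner ℝ (u t) (A (u2 t)) from hsym (u t) (u2 t),
        real_inner_comm]
    have hs3 : (inner ℝ (A (u1 t)) (u2 t) : ℝ) = inner ℝ (A (u2 t)) (u1 t) := by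
      rw [show (inner ℝ (A (u1 t)) (u2 t) : ℝ) = inner ℝ (u1 t) (A (u2 t)) from hsym (u1 t) (u2 t),
        real_inner_comm]
    have hc1 : (inner ℝ (u1 t) (u2 t) : ℝ) = inner ℝ (u2 t) (u1 t) := real_inner_comm _ _
    have hc2 : (inner ℝ (u2 t) (u3 t) : ℝ) = inner ℝ (u3 t) (u2 t) := real_inner_comm _ _
    have hc3 : (inner ℝ (u1 t) (u3 t) : ℝ) = inner ℝ (u3 t) (u1 t) := real_inner_comm _ _
    obtain ⟨m, hm⟩ : ∃ m, α = m * τ := ⟨α / τ, by field_simp⟩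
    obtain ⟨d, hd⟩ : ∃ d, c ^ 2 = d * b := ⟨c ^ 2 / b, by field_simp⟩
    have hm' : α / τ = m := by rw [hm]; field_simp
    have hd' : c ^ 2 / b = d := by rw [hd]; field_simp
    simp only [hm, hd, inner_add_left, inner_add_right, real_inner_smul_left,
      real_inner_smul_right, map_add, map_smul, real_inner_self_eq_norm_sq] at he1 he2
    simp only [hm', hd', inner_add_left, inner_add_right, real_inner_smul_left,
      real_inner_smul_right, map_add, map_smul, real_inner_self_eq_norm_sq]
    simp only [hd]
    linear_combination (-2 : ℝ) * he2 - 2 * k * he1 + b * hs3 + d * b * hs2 + k * d * b * hs1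
      - τ * hc2 - k * τ * hc3 - k * m * τ * hc1
  · have h0 : (0:ℝ) ≤ ‖u2 t‖ ^ 2 := sq_nonneg _
    have h1 : 0 ≤ 2 * τ * (α / τ - k) * ‖u2 t‖ ^ 2 := by
      have : 0 ≤ α / τ - k := by linarith
      have : 0 ≤ 2 * τ * (α / τ - k) := by nlinarith
      nlinarith
    have h2 : 0 ≤ 2 * b * (k - c ^ 2 / b) * (inner ℝ (A (u1 t)) (u1 t) : ℝ) := by
      have hp := hA_pos (u1 t)
      have : 0 ≤ k - c ^ 2 / b := by linarith
      have : 0 ≤ 2 * b * (k - c ^ 2 / b) := by nlinarith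
      nlinarith
    linarith
end
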